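/- Let θ > 0 and define ψ(θ) = 2√(3θ)|sin θ − θ cos θ| / (θ²√(2θ − sin 2θ)) (note 2θ − sin 2θ > 0 for θ > 0). Then for all real α₁, α₂, |∫₀¹ (α₁ x)(α₂ sin(θx)) dx| ≤ ψ(θ) · (∫₀¹ (α₁ x)² dx)^{1/2} · (∫₀¹ (α₂ sin(θx))² dx)^{1/2}. (Separability constant for the classes F = {α₁x} and G = {α₂ sin(θx)} on [0,1], used in the paper's numerical study of the convergence rate.) -/

import Mathlib

open Real intervalIntegral

/-- Separability constant `ψ(θ)` for the classes `F = {α₁ x}` and `G = {α₂ sin(θ x)}`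
on `[0,1]`, used in the paper's numerical study of the convergence rate (Section 5.1). -/
theorem separability_constant_linear_sine (θ : ℝ) (hθ : 0 < θ) :
    0 < 2 * θ - Real.sin (2 * θ)
    ∧ ∀ α₁ α₂ : ℝ,
      |∫ x in (0:ℝ)..1, (α₁ * x) * (α₂ * Real.sin (θ * x))|
        ≤ (2 * Real.sqrt (3 * θ) * |Real.sin θ - θ * Real.cos θ|
            / (θ ^ 2 * Real.sqrt (2 * θ - Real.sin (2 * θ))))
          * Real.sqrt (∫ x in (0:ℝ)..1, (α₁ * x) ^ 2)
          * Real.sqrt (∫ x in (0:ℝ)..1, (α₂ * Real.sin (θ * x)) ^ 2) := by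
  have hD : 0 < 2 * θ - Real.sin (2 * θ) := by
    have := Real.sin_lt (show (0:ℝ) < 2 * θ by linarith)
    linarith
  refine ⟨hD, fun α₁ α₂ => ?_⟩
  have hθ0 : θ ≠ 0 := ne_of_gt hθ
  -- integral 1
  have I1 : (∫ x in (0:ℝ)..1, (α₁ * x) * (α₂ * Real.sin (θ * x)))
      = α₁ * α₂ * ((Real.sin θ - θ * Real.cos θ) / θ ^ 2) := by
    have h : ∀ x ∈ Set.uIcc (0:ℝ) 1,
        HasDerivAt (fun y => α₁ * α₂ * (Real.sin (θ * y) / θ ^ 2 - y * Real.cos (θ * y) / θ))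
          ((α₁ * x) * (α₂ * Real.sin (θ * x))) x := by
      intro x _
      have h1 : HasDerivAt (fun y : ℝ => θ * y) θ x := by
        simpa using (hasDerivAt_id x).const_mul θ
      have hs : HasDerivAt (fun y => Real.sin (θ * y)) (Real.cos (θ * x) * θ) x :=
        (Real.hasDerivAt_sin (θ * x)).comp x h1
      have hc : HasDerivAt (fun y => Real.cos (θ * y)) (-Real.sin (θ * x) * θ) x :=
        (Real.hasDerivAt_cos (θ * x)).comp x h1
      have hxc : HasDerivAt (fun y => y * Real.cos (θ * y))
          (1 * Real.cos (θ * x) + x * (-Real.sin (θ * x) * θ)) x :=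
        (hasDerivAt_id x).mul hc
      have := ((hs.div_const (θ ^ 2)).sub (hxc.div_const θ)).const_mul (α₁ * α₂)
      convert this using 1
      · rfl
      · rfl
      · rfl
      have e1 : Real.cos (θ * x) * θ / θ ^ 2 = Real.cos (θ * x) / θ := by
        rw [pow_two, mul_div_mul_right _ _ hθ0]
      rw [e1, ← sub_div,
        show Real.cos (θ * x) - (1 * Real.cos (θ * x) + x * (-Real.sin (θ * x) * θ))
          = x * Real.sin (θ * x) * θ by ring,
        mul_div_cancel_right₀ _ hθ0]
      ring
    rw [intervalIntegral.integral_eq_sub_of_hasDerivAt h ?_]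
    · have e2 : (Real.sin θ - θ * Real.cos θ) / θ ^ 2 = Real.sin θ / θ ^ 2 - Real.cos θ / θ := by
        rw [sub_div, pow_two, mul_div_mul_left _ _ hθ0]
      norm_num [e2]
    · apply Continuous.intervalIntegrable
      fun_prop
  -- integral 2
  have I2 : (∫ x in (0:ℝ)..1, (α₁ * x) ^ 2) = α₁ ^ 2 / 3 := by
    have h : ∀ x ∈ Set.uIcc (0:ℝ) 1,
        HasDerivAt (fun y => α₁ ^ 2 * y ^ 3 / 3) ((α₁ * x) ^ 2) x := by
      intro x _
      have := ((hasDerivAt_pow 3 x).const_mul (α₁ ^ 2)).div_const 3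
      convert this using 1
      · rfl
      · rfl
      push_cast
      ring
    rw [intervalIntegral.integral_eq_sub_of_hasDerivAt h ?_]
    · norm_num
    · apply Continuous.intervalIntegrable; fun_prop
  -- integral 3
  have I3 : (∫ x in (0:ℝ)..1, (α₂ * Real.sin (θ * x)) ^ 2)
      = α₂ ^ 2 * ((2 * θ - Real.sin (2 * θ)) / (4 * θ)) := by
    have h : ∀ x ∈ Set.uIcc (0:ℝ) 1,
        HasDerivAt (fun y => α₂ ^ 2 * (y / 2 - Real.sin (2 * θ * y) / (4 * θ)))
          ((α₂ * Real.sin (θ * x)) ^ 2) x := by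
      intro x _
      have h1 : HasDerivAt (fun y : ℝ => 2 * θ * y) (2 * θ) x := by
        simpa using (hasDerivAt_id x).const_mul (2 * θ)
      have hs : HasDerivAt (fun y => Real.sin (2 * θ * y)) (Real.cos (2 * θ * x) * (2 * θ)) x :=
        (Real.hasDerivAt_sin (2 * θ * x)).comp x h1
      have hid : HasDerivAt (fun y : ℝ => y / 2) (1 / 2) x := by
        simpa using (hasDerivAt_id x).div_const 2
      have := (hid.sub (hs.div_const (4 * θ))).const_mul (α₂ ^ 2)
      convert this using 1
      · rfl
      · rfl
      · rfl
      have hcos : Real.cos (2 * θ * x) = 1 - 2 * Real.sin (θ * x) ^ 2 := by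
        rw [show 2 * θ * x = 2 * (θ * x) by ring, Real.cos_two_mul', Real.cos_sq']
        ring
      rw [hcos]
      field_simp
      ring
    rw [intervalIntegral.integral_eq_sub_of_hasDerivAt h ?_]
    · field_simp
      simp
      ring
    · apply Continuous.intervalIntegrable; fun_prop
  rw [I1, I2, I3]
  apply le_of_eq
  have hsθ : 0 < Real.sqrt θ := Real.sqrt_pos.2 hθ
  have hsD : 0 < Real.sqrt (2 * θ - Real.sin (2 * θ)) := Real.sqrt_pos.2 hD
  have hs3 : (0:ℝ) < Real.sqrt 3 := by positivity
  have e1 : Real.sqrt (α₁ ^ 2 / 3) = |α₁| / Real.sqrt 3 := by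
    rw [Real.sqrt_div (sq_nonneg α₁), Real.sqrt_sq_eq_abs]
  have e2 : Real.sqrt (α₂ ^ 2 * ((2 * θ - Real.sin (2 * θ)) / (4 * θ)))
      = |α₂| * (Real.sqrt (2 * θ - Real.sin (2 * θ)) / (2 * Real.sqrt θ)) := by
    rw [Real.sqrt_mul (sq_nonneg α₂), Real.sqrt_sq_eq_abs,
      Real.sqrt_div hD.le, show (4:ℝ) * θ = 2 ^ 2 * θ by ring,
      Real.sqrt_mul (by norm_num : (0:ℝ) ≤ 2 ^ 2),
      Real.sqrt_sq (by norm_num : (0:ℝ) ≤ 2)]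
  have e3 : Real.sqrt (3 * θ) = Real.sqrt 3 * Real.sqrt θ := Real.sqrt_mul (by norm_num) θ
  rw [e1, e2, e3, abs_mul, abs_mul, abs_div,
    abs_of_pos (by positivity : (0:ℝ) < θ ^ 2)]
  field_simp
  ring_nf
  have hsD2 : Real.sqrt (θ * 2 - Real.sin (θ * 2)) ≠ 0 := by
    rw [mul_comm θ 2]; exact hsD.ne'
  field_simp
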